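/- Let A, B be n×n positive definite complex matrices and 0 ≤ t ≤ 1. Then A ! B ≤ !_t(A,B) ≤ A ∇ B in the Loewner order (i.e., the differences are positive semidefinite). -/

import Mathlib

open Matrix ComplexOrder

/-- The weighted matrix harmonic mean `A !_t B = ((1-t)A⁻¹ + tB⁻¹)⁻¹`. -/
noncomputable def mharm {n : ℕ} (t : ℝ) (A B : Matrix (Fin n) (Fin n) ℂ) :
    Matrix (Fin n) (Fin n) ℂ :=
  (((1 - t : ℝ) : ℂ) • A⁻¹ + ((t : ℝ) : ℂ) • B⁻¹)⁻¹

/-- The harmonic Heinz matrix mean `!_t(A,B) = (A !_t B + A !_{1-t} B)/2`. -/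
noncomputable def mheinz {n : ℕ} (t : ℝ) (A B : Matrix (Fin n) (Fin n) ℂ) :
    Matrix (Fin n) (Fin n) ℂ :=
  (2 : ℂ)⁻¹ • (mharm t A B + mharm (1 - t) A B)

/-- The matrix arithmetic mean `A ∇ B = (A + B)/2`. -/
noncomputable def marith {n : ℕ} (A B : Matrix (Fin n) (Fin n) ℂ) :
    Matrix (Fin n) (Fin n) ℂ :=
  (2 : ℂ)⁻¹ • (A + B)

section Aux

variable {n : ℕ}

lemma herm_smul (r : ℝ) {P : Matrix (Fin n) (Fin n) ℂ} (h : P.IsHermitian) :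
    ((r : ℂ) • P).IsHermitian := by
  unfold Matrix.IsHermitian at *
  rw [conjTranspose_smul, h]
  simp [Complex.conj_ofReal]

lemma smul_posSemidef {r : ℝ} (hr : 0 ≤ r) {P : Matrix (Fin n) (Fin n) ℂ}
    (hP : P.PosSemidef) : ((r : ℂ) • P).PosSemidef := by
  refine PosSemidef.of_dotProduct_mulVec_nonneg (herm_smul r hP.1) (fun x => ?_)
  rw [smul_mulVec, dotProduct_smul, smul_eq_mul]
  exact mul_nonneg (by exact_mod_cast hr) (hP.dotProduct_mulVec_nonneg x)

lemma smul_posDef {r : ℝ} (hr : 0 < r) {P : Matrix (Fin n) (Fin n) ℂ}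
    (hP : P.PosDef) : ((r : ℂ) • P).PosDef := by
  refine PosDef.of_dotProduct_mulVec_pos (herm_smul r hP.1) (fun x hx => ?_)
  rw [smul_mulVec, dotProduct_smul, smul_eq_mul]
  exact mul_pos (by exact_mod_cast hr) (hP.dotProduct_mulVec_pos hx)

lemma mix_posDef (s : ℝ) (hs0 : 0 ≤ s) (hs1 : s ≤ 1)
    {X Y : Matrix (Fin n) (Fin n) ℂ} (hX : X.PosDef) (hY : Y.PosDef) :
    ((((1 - s : ℝ)) : ℂ) • X + ((s : ℝ) : ℂ) • Y).PosDef := by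
  rcases eq_or_lt_of_le hs1 with h | h
  · subst h
    have e1 : ((1 - (1:ℝ) : ℝ) : ℂ) = 0 := by norm_num
    have e2 : (((1:ℝ) : ℝ) : ℂ) = 1 := by norm_num
    rw [e1, e2, zero_smul, one_smul, zero_add]
    exact hY
  · exact (smul_posDef (by linarith) hX).add_posSemidef
      (smul_posSemidef hs0 hY.posSemidef)

/-- Cauchy–Schwarz style inequality for a positive definite matrix. -/
lemma dot_inv_aux {P : Matrix (Fin n) (Fin n) ℂ} (hP : P.PosDef) (u w : Fin n → ℂ) :
    star u ⬝ᵥ w + star w ⬝ᵥ u ≤ star u ⬝ᵥ (P⁻¹ *ᵥ u) + star w ⬝ᵥ (P *ᵥ w) := by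
  have hdet : IsUnit P.det := (isUnit_iff_isUnit_det _).1 hP.isUnit
  have hPP : P * P⁻¹ = 1 := mul_nonsing_inv _ hdet
  have hPP' : P⁻¹ * P = 1 := nonsing_inv_mul _ hdet
  have e1 : star (P⁻¹ *ᵥ u) ⬝ᵥ (P *ᵥ w) = star u ⬝ᵥ w := by
    rw [star_mulVec, hP.inv.1, dotProduct_mulVec, vecMul_vecMul, ← dotProduct_mulVec,
      hPP', one_mulVec]
  have e2 : star (P⁻¹ *ᵥ u) ⬝ᵥ (P *ᵥ (P⁻¹ *ᵥ u)) = star u ⬝ᵥ (P⁻¹ *ᵥ u) := by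
    rw [mulVec_mulVec, hPP, one_mulVec, star_mulVec, hP.inv.1, ← dotProduct_mulVec]
  have e3 : star w ⬝ᵥ (P *ᵥ (P⁻¹ *ᵥ u)) = star w ⬝ᵥ u := by
    rw [mulVec_mulVec, hPP, one_mulVec]
  have h := hP.posSemidef.dotProduct_mulVec_nonneg (P⁻¹ *ᵥ u - w)
  simp only [mulVec_sub, star_sub, sub_dotProduct, dotProduct_sub] at h
  rw [e1, e2, e3] at h
  rw [← sub_nonneg]
  exact h.trans_eq (by ring)

lemma key (s : ℝ) (hs0 : 0 ≤ s) (hs1 : s ≤ 1)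
    {X Y : Matrix (Fin n) (Fin n) ℂ} (hX : X.PosDef) (hY : Y.PosDef) :
    (((1 - s : ℝ) : ℂ) • X⁻¹ + ((s : ℝ) : ℂ) • Y⁻¹ -
      (((1 - s : ℝ) : ℂ) • X + ((s : ℝ) : ℂ) • Y)⁻¹).PosSemidef := by
  have hM : ((((1 - s : ℝ)) : ℂ) • X + ((s : ℝ) : ℂ) • Y).PosDef := mix_posDef s hs0 hs1 hX hY
  set M : Matrix (Fin n) (Fin n) ℂ := (((1 - s : ℝ)) : ℂ) • X + ((s : ℝ) : ℂ) • Y with hMdef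
  have hdet : IsUnit M.det := (isUnit_iff_isUnit_det _).1 hM.isUnit
  refine PosSemidef.of_dotProduct_mulVec_nonneg ?_ ?_
  · exact ((herm_smul _ hX.inv.1).add (herm_smul _ hY.inv.1)).sub hM.inv.1
  · intro u
    set w : Fin n → ℂ := M⁻¹ *ᵥ u with hw
    have hu : M *ᵥ w = u := by
      rw [hw, mulVec_mulVec, mul_nonsing_inv _ hdet, one_mulVec]
    have hc1 : (0:ℝ) ≤ 1 - s := by linarith
    have h1 := mul_le_mul_of_nonneg_left (dot_inv_aux hX u w)
      (by exact_mod_cast hc1 : (0:ℂ) ≤ ((1 - s : ℝ) : ℂ))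
    have h2 := mul_le_mul_of_nonneg_left (dot_inv_aux hY u w)
      (by exact_mod_cast hs0 : (0:ℂ) ≤ ((s : ℝ) : ℂ))
    have hc : ((1 - s : ℝ) : ℂ) + ((s : ℝ) : ℂ) = 1 := by push_cast; ring
    have e : ((1 - s : ℝ) : ℂ) * (star w ⬝ᵥ (X *ᵥ w)) + ((s : ℝ) : ℂ) * (star w ⬝ᵥ (Y *ᵥ w))
        = star w ⬝ᵥ u := by
      rw [← hu, hMdef]
      simp only [add_mulVec, smul_mulVec, dotProduct_add, dotProduct_smul, smul_eq_mul]
    have step : star u ⬝ᵥ w + star w ⬝ᵥ u ≤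
        (((1 - s : ℝ) : ℂ) * (star u ⬝ᵥ (X⁻¹ *ᵥ u)) + ((s : ℝ) : ℂ) * (star u ⬝ᵥ (Y⁻¹ *ᵥ u)))
          + star w ⬝ᵥ u := by
      calc star u ⬝ᵥ w + star w ⬝ᵥ u
          = ((1 - s : ℝ) : ℂ) * (star u ⬝ᵥ w + star w ⬝ᵥ u)
            + ((s : ℝ) : ℂ) * (star u ⬝ᵥ w + star w ⬝ᵥ u) := by
            rw [← add_mul, hc, one_mul]
        _ ≤ ((1 - s : ℝ) : ℂ) * (star u ⬝ᵥ (X⁻¹ *ᵥ u) + star w ⬝ᵥ (X *ᵥ w))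
            + ((s : ℝ) : ℂ) * (star u ⬝ᵥ (Y⁻¹ *ᵥ u) + star w ⬝ᵥ (Y *ᵥ w)) := add_le_add h1 h2
        _ = (((1 - s : ℝ) : ℂ) * (star u ⬝ᵥ (X⁻¹ *ᵥ u)) + ((s : ℝ) : ℂ) * (star u ⬝ᵥ (Y⁻¹ *ᵥ u)))
            + (((1 - s : ℝ) : ℂ) * (star w ⬝ᵥ (X *ᵥ w)) + ((s : ℝ) : ℂ) * (star w ⬝ᵥ (Y *ᵥ w))) := by
            ring
        _ = _ := by rw [e]
    have step2 := le_of_add_le_add_right step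
    simp only [sub_mulVec, add_mulVec, smul_mulVec, dotProduct_sub, dotProduct_add,
      dotProduct_smul, smul_eq_mul]
    rw [sub_nonneg]
    exact step2

end Aux

theorem stmt_16 {n : ℕ} (A B : Matrix (Fin n) (Fin n) ℂ)
    (hA : A.PosDef) (hB : B.PosDef) (t : ℝ) (ht0 : 0 ≤ t) (ht1 : t ≤ 1) :
    (mheinz t A B - mharm (1 / 2) A B).PosSemidef ∧
    (marith A B - mheinz t A B).PosSemidef := by
  have hAdet : IsUnit A.det := (isUnit_iff_isUnit_det _).1 hA.isUnit
  have hBdet : IsUnit B.det := (isUnit_iff_isUnit_det _).1 hB.isUnit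
  have hAinv : A⁻¹⁻¹ = A := nonsing_inv_nonsing_inv _ hAdet
  have hBinv : B⁻¹⁻¹ = B := nonsing_inv_nonsing_inv _ hBdet
  constructor
  · -- harmonic mean ≤ harmonic Heinz mean
    have hX : (((1 - t : ℝ) : ℂ) • A⁻¹ + ((t : ℝ) : ℂ) • B⁻¹).PosDef :=
      mix_posDef t ht0 ht1 hA.inv hB.inv
    have hY : (((1 - (1 - t) : ℝ) : ℂ) • A⁻¹ + (((1 - t) : ℝ) : ℂ) • B⁻¹).PosDef :=
      mix_posDef (1 - t) (by linarith) (by linarith) hA.inv hB.inv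
    have hkey := key (1/2) (by norm_num) (by norm_num) hX hY
    have hMeq : ((1 - (1/2 : ℝ) : ℝ) : ℂ) • (((1 - t : ℝ) : ℂ) • A⁻¹ + ((t : ℝ) : ℂ) • B⁻¹)
        + (((1/2 : ℝ) : ℝ) : ℂ) • (((1 - (1 - t) : ℝ) : ℂ) • A⁻¹ + (((1 - t) : ℝ) : ℂ) • B⁻¹)
        = ((1 - (1/2 : ℝ) : ℝ) : ℂ) • A⁻¹ + (((1/2 : ℝ) : ℝ) : ℂ) • B⁻¹ := by
      ext i j
      simp only [Matrix.add_apply, Matrix.smul_apply, smul_eq_mul]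
      push_cast
      ring
    rw [hMeq] at hkey
    convert hkey using 1
    unfold mheinz mharm
    ext i j
    simp only [Matrix.sub_apply, Matrix.add_apply, Matrix.smul_apply, smul_eq_mul]
    push_cast
    ring
  · -- harmonic Heinz mean ≤ arithmetic mean
    have h1 := key t ht0 ht1 hA.inv hB.inv
    have h2 := key (1 - t) (by linarith) (by linarith) hA.inv hB.inv
    rw [hAinv, hBinv] at h1 h2
    have hsum := smul_posSemidef (r := 1/2) (by norm_num) (h1.add h2)
    convert hsum using 1
    unfold marith mheinz mharm
    ext i j
    simp only [Matrix.sub_apply, Matrix.add_apply, Matrix.smul_apply, smul_eq_mul]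
    push_cast
    ring
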